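/- Let N ≥ 2 be an integer, r > 0 and h ≠ 0. Define X₀(s,t) = 0 and X_j(s,t) = r·e^{−2i(1/h² − (N+1)/r²) t}·e^{i s/h}·e^{2πi(j−1)/N} for j = 1,…,N. Then X_j(s,t) ≠ X_k(s,t) for all 0 ≤ j < k ≤ N, and the family (X₀, X₁,…,X_N) solves the Klein–Majda–Damodaran system of N+1 filaments with all circulations κ_j = 2 (j = 0,…,N) and all α_j = 1: for each j = 0,1,…,N, ∂_t X_j = 2i ∂_s² X_j + 2i Σ_{k≠j, 0≤k≤N} 2 (X_j − X_k)/|X_j − X_k|². In particular the central straight filament X₀ ≡ 0 is stationary because Σ_{k=1}^N X_k = 0. -/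

import Mathlib

open Filter Finset

noncomputable section

/-- The configuration of `N` helices surrounding a central straight filament:
`X₀ ≡ 0` and, for `j = 1, …, N`,
`X_j(s,t) = r e^{−2i(1/h² − (N+1)/r²)t} e^{is/h} e^{2πi(j−1)/N}`. -/
def helixWithCenter (N : ℕ) (r h : ℝ) (j : Fin (N + 1)) (s t : ℝ) : ℂ :=
  if j = 0 then 0
  else
    (r : ℂ)
      * Complex.exp (-2 * Complex.I * (((1 / h ^ 2 - ((N : ℝ) + 1) / r ^ 2 : ℝ)) : ℂ) * (t : ℂ))
      * Complex.exp (Complex.I * (s : ℂ) / (h : ℂ))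
      * Complex.exp (2 * (Real.pi : ℂ) * Complex.I * ((((j : ℕ) : ℝ) - 1 : ℝ) : ℂ) / (N : ℂ))

def zu (N : ℕ) : ZMod N → ℂ := fun m => Complex.exp (2 * Real.pi * Complex.I / N) ^ m.val

lemma zu_prim (N : ℕ) (hN : N ≠ 0) : IsPrimitiveRoot (Complex.exp (2 * Real.pi * Complex.I / N)) N :=
  Complex.isPrimitiveRoot_exp N hN

lemma zu_ne_zero (N : ℕ) (a : ZMod N) : zu N a ≠ 0 :=
  pow_ne_zero _ (Complex.exp_ne_zero _)

lemma zu_zero (N : ℕ) [NeZero N] : zu N 0 = 1 := by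
  simp [zu, ZMod.val_zero]

lemma zu_add (N : ℕ) (hN : 2 ≤ N) (a b : ZMod N) : zu N (a + b) = zu N a * zu N b := by
  haveI : NeZero N := ⟨by omega⟩
  have h1 : (Complex.exp (2 * Real.pi * Complex.I / N)) ^ N = 1 := (zu_prim N (by omega)).pow_eq_one
  unfold zu
  rw [ZMod.val_add, ← pow_eq_pow_mod _ h1, pow_add]

lemma zu_ne_one (N : ℕ) (hN : 2 ≤ N) {a : ZMod N} (ha : a ≠ 0) : zu N a ≠ 1 := by
  haveI : NeZero N := ⟨by omega⟩
  have h1 : 0 < a.val := by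
    rcases Nat.eq_zero_or_pos a.val with h | h
    · exact absurd ((ZMod.val_eq_zero a).mp h) ha
    · exact h
  exact (zu_prim N (by omega)).pow_ne_one_of_pos_of_lt h1.ne' (ZMod.val_lt a)

lemma zu_inj (N : ℕ) (hN : 2 ≤ N) {a b : ZMod N} (hab : zu N a = zu N b) : a = b := by
  haveI : NeZero N := ⟨by omega⟩
  have := (zu_prim N (by omega)).pow_inj (ZMod.val_lt a) (ZMod.val_lt b) hab
  exact ZMod.val_injective N this

lemma zu_neg (N : ℕ) (hN : 2 ≤ N) (a : ZMod N) : zu N (-a) = (zu N a)⁻¹ := by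
  haveI : NeZero N := ⟨by omega⟩
  have h := zu_add N hN (-a) a
  rw [neg_add_cancel, zu_zero N] at h
  exact eq_inv_of_mul_eq_one_left h.symm

lemma zu_abs (N : ℕ) (a : ZMod N) : ‖zu N a‖ = 1 := by
  unfold zu
  rw [norm_pow]
  have : (2 * (Real.pi:ℂ) * Complex.I / N) = ((2 * Real.pi / N : ℝ) : ℂ) * Complex.I := by
    push_cast; ring
  rw [this, Complex.norm_exp_ofReal_mul_I, one_pow]

lemma zu_conj (N : ℕ) (a : ZMod N) :
    (starRingEnd ℂ) (zu N a) = (zu N a)⁻¹ :=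
  (Complex.inv_eq_conj (zu_abs N a)).symm

lemma zu_sum (N : ℕ) (hN : 2 ≤ N) [NeZero N] : ∑ m : ZMod N, zu N m = 0 := by
  have h1 : ∑ m : ZMod N, zu N m = ∑ i ∈ Finset.range N, (Complex.exp (2 * Real.pi * Complex.I / N)) ^ i := by
    apply Finset.sum_nbij' (fun (a : ZMod N) => a.val) (fun i => (i : ZMod N))
    · intro a _; exact Finset.mem_range.mpr (ZMod.val_lt a)
    · intro i _; exact Finset.mem_univ _
    · intro a _; simp [ZMod.natCast_val, ZMod.cast_id]
    · intro i hi; exact ZMod.val_cast_of_lt (Finset.mem_range.mp hi)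
    · intro a _; rfl
  have hζ1 : (Complex.exp (2 * Real.pi * Complex.I / N)) ≠ 1 := by
    have := (zu_prim N (by omega)).pow_ne_one_of_pos_of_lt one_ne_zero (by omega)
    simpa using this
  rw [h1, geom_sum_eq hζ1, (zu_prim N (by omega)).pow_eq_one, sub_self, zero_div]

lemma zu_pair (N : ℕ) (hN : 2 ≤ N) [NeZero N] :
    ∑ m ∈ (Finset.univ.erase (0 : ZMod N)), (1 - zu N m)⁻¹ = ((N : ℂ) - 1) / 2 := by
  have hneg : ∑ m ∈ (Finset.univ.erase (0 : ZMod N)), (1 - zu N m)⁻¹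
      = ∑ m ∈ (Finset.univ.erase (0 : ZMod N)), (1 - zu N (-m))⁻¹ := by
    apply Finset.sum_equiv (Equiv.neg (ZMod N))
    · intro i; simp [Finset.mem_erase]
    · intro i _; simp
  have h2 : (2 : ℂ) * ∑ m ∈ (Finset.univ.erase (0 : ZMod N)), (1 - zu N m)⁻¹
      = ((Finset.univ.erase (0 : ZMod N)).card : ℂ) := by
    rw [two_mul]
    nth_rewrite 2 [hneg]
    rw [← Finset.sum_add_distrib]
    have : ∀ m ∈ Finset.univ.erase (0 : ZMod N), (1 - zu N m)⁻¹ + (1 - zu N (-m))⁻¹ = 1 := by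
      intro m hm
      have hm0 : m ≠ 0 := (Finset.mem_erase.mp hm).1
      have hw1 : (1 : ℂ) - zu N m ≠ 0 := sub_ne_zero.mpr (Ne.symm (zu_ne_one N hN hm0))
      have hw0 : zu N m ≠ 0 := zu_ne_zero N m
      rw [zu_neg N hN]
      have hw2 : (1 : ℂ) - (zu N m)⁻¹ ≠ 0 := by
        rw [sub_ne_zero]
        intro hx
        exact (zu_ne_one N hN hm0) (by rw [← inv_inv (zu N m), ← hx, inv_one])
      rw [inv_eq_one_div, inv_eq_one_div, div_add_div _ _ hw1 hw2,
        div_eq_one_iff_eq (mul_ne_zero hw1 hw2)]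
      field_simp
      ring
    rw [Finset.sum_congr rfl this, Finset.sum_const, nsmul_eq_mul, mul_one]
  have hcard : (Finset.univ.erase (0 : ZMod N)).card = N - 1 := by
    rw [Finset.card_erase_of_mem (Finset.mem_univ _), Finset.card_univ, ZMod.card]
  rw [hcard] at h2
  have : ((N - 1 : ℕ) : ℂ) = (N : ℂ) - 1 := by
    push_cast [Nat.cast_sub (by omega : 1 ≤ N)]; ring
  rw [this] at h2
  linear_combination h2 / 2

lemma zu_shift (N : ℕ) (hN : 2 ≤ N) [NeZero N] (p : ZMod N) :
    ∑ m ∈ (Finset.univ.erase p), (zu N p - zu N m)⁻¹ = ((N : ℂ) - 1) / 2 * (zu N p)⁻¹ := by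
  have key : ∑ q ∈ (Finset.univ.erase (0 : ZMod N)), (zu N p)⁻¹ * (1 - zu N q)⁻¹
      = ∑ m ∈ (Finset.univ.erase p), (zu N p - zu N m)⁻¹ := by
    apply Finset.sum_equiv (Equiv.addRight p)
    · intro i; simp
    · intro q _
      simp only [Equiv.coe_addRight]
      rw [zu_add N hN, show zu N p - zu N q * zu N p = zu N p * (1 - zu N q) by ring, mul_inv]
  rw [← key, ← Finset.mul_sum, zu_pair N hN, mul_comm]

lemma zu_main (N : ℕ) (hN : 2 ≤ N) [NeZero N] (p : ZMod N) :
    ∑ m ∈ (Finset.univ.erase p),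
        (zu N p - zu N m) / ((‖zu N p - zu N m‖ : ℝ) : ℂ) ^ 2
      = ((N : ℂ) - 1) / 2 * zu N p := by
  have step1 : ∀ m ∈ (Finset.univ.erase p),
      (zu N p - zu N m) / ((‖zu N p - zu N m‖ : ℝ) : ℂ) ^ 2
        = (zu N (-p) - zu N (-m))⁻¹ := by
    intro m hm
    have hmp : m ≠ p := (Finset.mem_erase.mp hm).1
    have hz : zu N p - zu N m ≠ 0 := by
      rw [sub_ne_zero]
      exact fun hx => hmp (zu_inj N hN hx.symm)
    set z := zu N p - zu N m with hzdef
    have habs : ((‖z‖ : ℝ) : ℂ) ^ 2 = z * (starRingEnd ℂ) z := by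
      rw [← Complex.ofReal_pow, Complex.sq_norm, Complex.mul_conj]
    rw [habs, div_mul_cancel_left₀ hz]
    congr 1
    rw [hzdef, map_sub, zu_conj, zu_conj, zu_neg N hN, zu_neg N hN]
  rw [Finset.sum_congr rfl step1]
  have step2 : ∑ m ∈ (Finset.univ.erase p), (zu N (-p) - zu N (-m))⁻¹
      = ∑ m ∈ (Finset.univ.erase (-p)), (zu N (-p) - zu N m)⁻¹ := by
    apply Finset.sum_equiv (Equiv.neg (ZMod N))
    · intro i; simp [Finset.mem_erase, neg_eq_iff_eq_neg]
    · intro i _; simp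
  rw [step2, zu_shift N hN, zu_neg N hN, inv_inv]

def emm (N : ℕ) (k : Fin (N + 1)) : ZMod N := ((k.val - 1 : ℕ) : ZMod N)

def helixC (N : ℕ) (r h : ℝ) (s t : ℝ) : ℂ :=
  (r : ℂ) * Complex.exp (-2 * Complex.I * (((1 / h ^ 2 - ((N : ℝ) + 1) / r ^ 2 : ℝ)) : ℂ) * (t : ℂ))
    * Complex.exp (Complex.I * (s : ℂ) / (h : ℂ))

lemma helix_eq (N : ℕ) (hN : 2 ≤ N) (r h : ℝ) (j : Fin (N + 1)) (hj : j ≠ 0) (s t : ℝ) :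
    helixWithCenter N r h j s t = helixC N r h s t * zu N (emm N j) := by
  haveI : NeZero N := ⟨by omega⟩
  have hj1 : 1 ≤ j.val := by
    rcases Nat.eq_zero_or_pos j.val with h0 | h0
    · exact absurd (Fin.ext h0) hj
    · exact h0
  have hjN : j.val - 1 < N := by have := j.isLt; omega
  have hval : (emm N j).val = j.val - 1 := ZMod.val_cast_of_lt hjN
  have hphase : Complex.exp (2 * (Real.pi : ℂ) * Complex.I * ((((j : ℕ) : ℝ) - 1 : ℝ) : ℂ) / (N : ℂ))
      = zu N (emm N j) := by
    unfold zu
    rw [hval, ← Complex.exp_nat_mul]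
    congr 1
    have hcast : ((((j : ℕ) : ℝ) - 1 : ℝ) : ℂ) = ((j.val - 1 : ℕ) : ℂ) := by
      push_cast [Nat.cast_sub hj1]; ring
    rw [hcast]
    ring
  unfold helixWithCenter helixC
  rw [if_neg hj, hphase]

lemma helixC_abs (N : ℕ) (r h : ℝ) (hr : 0 < r) (s t : ℝ) :
    ‖helixC N r h s t‖ = r := by
  unfold helixC
  rw [norm_mul, norm_mul, Complex.norm_real, Real.norm_eq_abs,
    show (-2 * Complex.I * (((1 / h ^ 2 - ((N : ℝ) + 1) / r ^ 2 : ℝ)) : ℂ) * (t : ℂ))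
      = ((-2 * (1 / h ^ 2 - ((N : ℝ) + 1) / r ^ 2) * t : ℝ) : ℂ) * Complex.I by push_cast; ring,
    show (Complex.I * (s : ℂ) / (h : ℂ)) = ((s / h : ℝ) : ℂ) * Complex.I by push_cast; ring,
    Complex.norm_exp_ofReal_mul_I, Complex.norm_exp_ofReal_mul_I, abs_of_pos hr]
  ring

lemma helixC_ne_zero (N : ℕ) (r h : ℝ) (hr : 0 < r) (s t : ℝ) : helixC N r h s t ≠ 0 := by
  intro hx
  have := helixC_abs N r h hr s t
  rw [hx, norm_zero] at this
  exact absurd this.symm (ne_of_gt hr)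

lemma emm_inj (N : ℕ) (hN : 2 ≤ N) {j k : Fin (N + 1)} (hj : j ≠ 0) (hk : k ≠ 0)
    (he : emm N j = emm N k) : j = k := by
  haveI : NeZero N := ⟨by omega⟩
  have hj1 : 1 ≤ j.val := by
    rcases Nat.eq_zero_or_pos j.val with h0 | h0
    · exact absurd (Fin.ext h0) hj
    · exact h0
  have hk1 : 1 ≤ k.val := by
    rcases Nat.eq_zero_or_pos k.val with h0 | h0
    · exact absurd (Fin.ext h0) hk
    · exact h0
  have hjN : j.val - 1 < N := by have := j.isLt; omega
  have hkN : k.val - 1 < N := by have := k.isLt; omega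
  have h1 : (emm N j).val = j.val - 1 := ZMod.val_cast_of_lt hjN
  have h2 : (emm N k).val = k.val - 1 := ZMod.val_cast_of_lt hkN
  have : j.val - 1 = k.val - 1 := by rw [← h1, ← h2, he]
  exact Fin.ext (by omega)

lemma sum_bij_emm (N : ℕ) (hN : 2 ≤ N) [NeZero N] (g : ZMod N → ℂ) :
    ∑ k ∈ (Finset.univ.erase (0 : Fin (N + 1))), g (emm N k) = ∑ m : ZMod N, g m := by
  haveI : NeZero N := ⟨by omega⟩
  apply Finset.sum_nbij' (fun k => emm N k)
      (fun m : ZMod N => (⟨m.val + 1, by have := ZMod.val_lt m; omega⟩ : Fin (N + 1)))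
  · intro a _; exact Finset.mem_univ _
  · intro m _
    refine Finset.mem_erase.mpr ⟨?_, Finset.mem_univ _⟩
    intro hx
    exact absurd (congrArg Fin.val hx) (by simp)
  · intro a ha
    have ha0 : a ≠ 0 := (Finset.mem_erase.mp ha).1
    have ha1 : 1 ≤ a.val := by
      rcases Nat.eq_zero_or_pos a.val with h0 | h0
      · exact absurd (Fin.ext h0) ha0
      · exact h0
    have haN : a.val - 1 < N := by have := a.isLt; omega
    apply Fin.ext
    simp only [emm, ZMod.val_cast_of_lt haN]
    omega
  · intro m _
    simp only [emm, Nat.add_sub_cancel]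
    rw [ZMod.natCast_val, ZMod.cast_id]
  · intro a _; rfl

lemma sum_bij_emm2 (N : ℕ) (hN : 2 ≤ N) [NeZero N] (j : Fin (N + 1)) (hj : j ≠ 0) (g : ZMod N → ℂ) :
    ∑ k ∈ ((Finset.univ.erase j).erase (0 : Fin (N + 1))), g (emm N k)
      = ∑ m ∈ (Finset.univ.erase (emm N j)), g m := by
  apply Finset.sum_nbij' (fun k => emm N k)
      (fun m : ZMod N => (⟨m.val + 1, by have := ZMod.val_lt m; omega⟩ : Fin (N + 1)))
  · intro a ha
    rcases Finset.mem_erase.mp ha with ⟨ha0, ha'⟩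
    rcases Finset.mem_erase.mp ha' with ⟨haj, _⟩
    exact Finset.mem_erase.mpr ⟨fun hx => haj (emm_inj N hN ha0 hj hx), Finset.mem_univ _⟩
  · intro m hm
    have hmj : m ≠ emm N j := (Finset.mem_erase.mp hm).1
    refine Finset.mem_erase.mpr ⟨?_, Finset.mem_erase.mpr ⟨?_, Finset.mem_univ _⟩⟩
    · intro hx
      exact absurd (congrArg Fin.val hx) (by simp)
    · intro hx
      apply hmj
      rw [← hx]
      simp only [emm, Nat.add_sub_cancel]
      rw [ZMod.natCast_val, ZMod.cast_id]
  · intro a ha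
    have ha0 : a ≠ 0 := (Finset.mem_erase.mp ha).1
    have ha1 : 1 ≤ a.val := by
      rcases Nat.eq_zero_or_pos a.val with h0 | h0
      · exact absurd (Fin.ext h0) ha0
      · exact h0
    have haN : a.val - 1 < N := by have := a.isLt; omega
    apply Fin.ext
    simp only [emm, ZMod.val_cast_of_lt haN]
    omega
  · intro m _
    simp only [emm, Nat.add_sub_cancel]
    rw [ZMod.natCast_val, ZMod.cast_id]
  · intro a _; rfl

lemma deriv_mul_cexp (K c : ℂ) (t : ℝ) :
    deriv (fun τ : ℝ => K * Complex.exp (c * (τ : ℂ))) t = c * (K * Complex.exp (c * (t : ℂ))) := by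
  have h1 : HasDerivAt (fun z : ℂ => Complex.exp (c * z)) (Complex.exp (c * ((t : ℝ) : ℂ)) * c) ((t : ℝ) : ℂ) := by
    simpa using ((hasDerivAt_id ((t : ℝ) : ℂ)).const_mul c).cexp
  have h2 := (h1.comp_ofReal).const_mul K
  rw [h2.deriv]; ring

lemma helix_deriv_t (N : ℕ) (r h : ℝ) (j : Fin (N + 1)) (hj : j ≠ 0) (s t : ℝ) :
    deriv (fun τ : ℝ => helixWithCenter N r h j s τ) t
      = (-2 * Complex.I * (((1 / h ^ 2 - ((N : ℝ) + 1) / r ^ 2 : ℝ)) : ℂ))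
          * helixWithCenter N r h j s t := by
  have hfun : (fun τ : ℝ => helixWithCenter N r h j s τ)
      = fun τ : ℝ => ((r : ℂ) * Complex.exp (Complex.I * (s : ℂ) / (h : ℂ))
            * Complex.exp (2 * (Real.pi : ℂ) * Complex.I * ((((j : ℕ) : ℝ) - 1 : ℝ) : ℂ) / (N : ℂ)))
          * Complex.exp ((-2 * Complex.I * (((1 / h ^ 2 - ((N : ℝ) + 1) / r ^ 2 : ℝ)) : ℂ)) * (τ : ℂ)) := by
    funext τ
    simp only [helixWithCenter, if_neg hj]
    ring
  rw [hfun, deriv_mul_cexp]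
  simp only [helixWithCenter, if_neg hj]
  ring

lemma helix_deriv_s (N : ℕ) (r h : ℝ) (j : Fin (N + 1)) (hj : j ≠ 0) (t : ℝ) (σ : ℝ) :
    deriv (fun σ' : ℝ => helixWithCenter N r h j σ' t) σ
      = (Complex.I / (h : ℂ)) * helixWithCenter N r h j σ t := by
  have hfun : (fun σ' : ℝ => helixWithCenter N r h j σ' t)
      = fun σ' : ℝ => ((r : ℂ)
            * Complex.exp (-2 * Complex.I * (((1 / h ^ 2 - ((N : ℝ) + 1) / r ^ 2 : ℝ)) : ℂ) * (t : ℂ))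
            * Complex.exp (2 * (Real.pi : ℂ) * Complex.I * ((((j : ℕ) : ℝ) - 1 : ℝ) : ℂ) / (N : ℂ)))
          * Complex.exp ((Complex.I / (h : ℂ)) * (σ' : ℂ)) := by
    funext σ'
    simp only [helixWithCenter, if_neg hj]
    rw [show Complex.I * (σ' : ℂ) / (h : ℂ) = (Complex.I / (h : ℂ)) * (σ' : ℂ) by ring]
    ring
  rw [hfun, deriv_mul_cexp]
  simp only [helixWithCenter, if_neg hj]
  rw [show Complex.I * (σ : ℂ) / (h : ℂ) = (Complex.I / (h : ℂ)) * (σ : ℂ) by ring]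
  ring

lemma helix_deriv2_s (N : ℕ) (r h : ℝ) (j : Fin (N + 1)) (hj : j ≠ 0) (s t : ℝ) :
    deriv (fun σ => deriv (fun σ' : ℝ => helixWithCenter N r h j σ' t) σ) s
      = (Complex.I / (h : ℂ)) * ((Complex.I / (h : ℂ)) * helixWithCenter N r h j s t) := by
  have h1 : (fun σ => deriv (fun σ' : ℝ => helixWithCenter N r h j σ' t) σ)
      = fun σ : ℝ => (Complex.I / (h : ℂ)) * helixWithCenter N r h j σ t :=
    funext fun σ => helix_deriv_s N r h j hj t σ
  rw [h1]
  have hfun : (fun σ : ℝ => (Complex.I / (h : ℂ)) * helixWithCenter N r h j σ t)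
      = fun σ : ℝ => ((Complex.I / (h : ℂ)) * ((r : ℂ)
            * Complex.exp (-2 * Complex.I * (((1 / h ^ 2 - ((N : ℝ) + 1) / r ^ 2 : ℝ)) : ℂ) * (t : ℂ))
            * Complex.exp (2 * (Real.pi : ℂ) * Complex.I * ((((j : ℕ) : ℝ) - 1 : ℝ) : ℂ) / (N : ℂ))))
          * Complex.exp ((Complex.I / (h : ℂ)) * (σ : ℂ)) := by
    funext σ
    simp only [helixWithCenter, if_neg hj]
    rw [show Complex.I * (σ : ℂ) / (h : ℂ) = (Complex.I / (h : ℂ)) * (σ : ℂ) by ring]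
    ring
  rw [hfun, deriv_mul_cexp]
  simp only [helixWithCenter, if_neg hj]
  rw [show Complex.I * (s : ℂ) / (h : ℂ) = (Complex.I / (h : ℂ)) * (s : ℂ) by ring]
  ring

/-- **`N` helices around a central straight filament solve the Klein–Majda–Damodaran
system of `N+1` filaments** with all circulations `κ_j = 2` and all `α_j = 1`:
the filaments are pairwise disjoint, each solves
`∂ₜ X_j = 2i ∂ₛ² X_j + 2i ∑_{k ≠ j} 2 (X_j − X_k)/|X_j − X_k|²`, and in particular the
central filament is stationary since `∑_{k=1}^N X_k = 0`. -/
theorem helix_with_center_solves_KMD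
    (N : ℕ) (hN : 2 ≤ N) (r : ℝ) (hr : 0 < r) (h : ℝ) (hh : h ≠ 0) :
    (∀ (j k : Fin (N + 1)) (s t : ℝ), j ≠ k →
      helixWithCenter N r h j s t ≠ helixWithCenter N r h k s t) ∧
    (∀ (j : Fin (N + 1)) (s t : ℝ),
      deriv (fun τ => helixWithCenter N r h j s τ) t
        = 2 * Complex.I * deriv (fun σ => deriv (fun σ' => helixWithCenter N r h j σ' t) σ) s
          + 2 * Complex.I * ∑ k ∈ Finset.univ.erase j,
              (2 : ℂ) * (helixWithCenter N r h j s t - helixWithCenter N r h k s t)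
                / ((‖helixWithCenter N r h j s t - helixWithCenter N r h k s t‖ : ℝ) : ℂ) ^ 2) ∧
    (∀ s t : ℝ, ∑ k ∈ Finset.univ.erase (0 : Fin (N + 1)), helixWithCenter N r h k s t = 0) := by
  haveI : NeZero N := ⟨by omega⟩
  have hr0 : (r : ℂ) ≠ 0 := Complex.ofReal_ne_zero.mpr (ne_of_gt hr)
  have hh0 : (h : ℂ) ≠ 0 := Complex.ofReal_ne_zero.mpr hh
  have hX0 : ∀ s t : ℝ, helixWithCenter N r h 0 s t = 0 := fun s t => by
    simp [helixWithCenter]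
  -- part 3
  have part3 : ∀ s t : ℝ,
      ∑ k ∈ Finset.univ.erase (0 : Fin (N + 1)), helixWithCenter N r h k s t = 0 := by
    intro s t
    have := sum_bij_emm N hN (fun m => helixC N r h s t * zu N m)
    rw [Finset.sum_congr rfl (fun k hk => helix_eq N hN r h k (Finset.mem_erase.mp hk).1 s t),
      this, ← Finset.mul_sum, zu_sum N hN, mul_zero]
  -- part 1
  have part1 : ∀ (j k : Fin (N + 1)) (s t : ℝ), j ≠ k →
      helixWithCenter N r h j s t ≠ helixWithCenter N r h k s t := by
    intro j k s t hjk heq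
    have hXne : ∀ m : Fin (N + 1), m ≠ 0 → helixWithCenter N r h m s t ≠ 0 := by
      intro m hm
      rw [helix_eq N hN r h m hm s t]
      exact mul_ne_zero (helixC_ne_zero N r h hr s t) (zu_ne_zero N _)
    by_cases hj : j = 0
    · subst hj
      have hk : k ≠ 0 := fun hx => hjk (hx ▸ rfl)
      exact hXne k hk (by rw [← heq, hX0])
    · by_cases hk : k = 0
      · subst hk
        exact hXne j hj (by rw [heq, hX0])
      · rw [helix_eq N hN r h j hj s t, helix_eq N hN r h k hk s t] at heq
        have := mul_left_cancel₀ (helixC_ne_zero N r h hr s t) heq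
        exact hjk (emm_inj N hN hj hk (zu_inj N hN this))
  refine ⟨part1, ?_, part3⟩
  -- part 2
  intro j s t
  by_cases hj : j = 0
  · subst hj
    have hL : (fun τ : ℝ => helixWithCenter N r h 0 s τ) = fun _ => (0 : ℂ) :=
      funext fun τ => hX0 s τ
    have hS1 : (fun σ : ℝ => deriv (fun σ' : ℝ => helixWithCenter N r h 0 σ' t) σ)
        = fun _ => (0 : ℂ) := by
      funext σ
      rw [show (fun σ' : ℝ => helixWithCenter N r h 0 σ' t) = fun _ => (0 : ℂ) from
        funext fun σ' => hX0 σ' t, deriv_const]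
    have hsum0 : ∑ k ∈ Finset.univ.erase (0 : Fin (N + 1)),
        (2 : ℂ) * (helixWithCenter N r h 0 s t - helixWithCenter N r h k s t)
          / ((‖helixWithCenter N r h 0 s t - helixWithCenter N r h k s t‖ : ℝ) : ℂ) ^ 2
        = 0 := by
      have hterm : ∀ k ∈ Finset.univ.erase (0 : Fin (N + 1)),
          (2 : ℂ) * (helixWithCenter N r h 0 s t - helixWithCenter N r h k s t)
            / ((‖helixWithCenter N r h 0 s t - helixWithCenter N r h k s t‖ : ℝ) : ℂ) ^ 2
          = (-2 / (r : ℂ) ^ 2) * helixWithCenter N r h k s t := by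
        intro k hk
        have hk0 : k ≠ 0 := (Finset.mem_erase.mp hk).1
        have habs : ‖helixWithCenter N r h 0 s t - helixWithCenter N r h k s t‖ = r := by
          rw [hX0, zero_sub, norm_neg, helix_eq N hN r h k hk0 s t, norm_mul,
            helixC_abs N r h hr s t, zu_abs, mul_one]
        rw [habs, hX0, zero_sub]
        push_cast
        field_simp
      rw [Finset.sum_congr rfl hterm, ← Finset.mul_sum, part3, mul_zero]
    rw [hL, deriv_const, hS1, deriv_const, hsum0]
    ring
  · -- j ≠ 0
    have hsum : ∑ k ∈ Finset.univ.erase j,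
        (2 : ℂ) * (helixWithCenter N r h j s t - helixWithCenter N r h k s t)
          / ((‖helixWithCenter N r h j s t - helixWithCenter N r h k s t‖ : ℝ) : ℂ) ^ 2
        = (((N : ℂ) + 1) / (r : ℂ) ^ 2) * helixWithCenter N r h j s t := by
      have h0mem : (0 : Fin (N + 1)) ∈ Finset.univ.erase j :=
        Finset.mem_erase.mpr ⟨fun hx => hj hx.symm, Finset.mem_univ _⟩
      rw [← Finset.add_sum_erase _ _ h0mem]
      have hterm0 : (2 : ℂ) * (helixWithCenter N r h j s t - helixWithCenter N r h 0 s t)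
            / ((‖helixWithCenter N r h j s t - helixWithCenter N r h 0 s t‖ : ℝ) : ℂ) ^ 2
          = (2 / (r : ℂ) ^ 2) * helixWithCenter N r h j s t := by
        have habs : ‖helixWithCenter N r h j s t - helixWithCenter N r h 0 s t‖ = r := by
          rw [hX0, sub_zero, helix_eq N hN r h j hj s t, norm_mul,
            helixC_abs N r h hr s t, zu_abs, mul_one]
        rw [habs, hX0, sub_zero]
        push_cast
        field_simp
      have hrest : ∑ k ∈ (Finset.univ.erase j).erase (0 : Fin (N + 1)),
          (2 : ℂ) * (helixWithCenter N r h j s t - helixWithCenter N r h k s t)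
            / ((‖helixWithCenter N r h j s t - helixWithCenter N r h k s t‖ : ℝ) : ℂ) ^ 2
          = ((2 : ℂ) * helixC N r h s t / (r : ℂ) ^ 2)
              * (((N : ℂ) - 1) / 2 * zu N (emm N j)) := by
        have hterm : ∀ k ∈ (Finset.univ.erase j).erase (0 : Fin (N + 1)),
            (2 : ℂ) * (helixWithCenter N r h j s t - helixWithCenter N r h k s t)
              / ((‖helixWithCenter N r h j s t - helixWithCenter N r h k s t‖ : ℝ) : ℂ) ^ 2
            = ((2 : ℂ) * helixC N r h s t / (r : ℂ) ^ 2)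
                * ((zu N (emm N j) - zu N (emm N k))
                    / ((‖zu N (emm N j) - zu N (emm N k)‖ : ℝ) : ℂ) ^ 2) := by
          intro k hk
          have hk0 : k ≠ 0 := (Finset.mem_erase.mp hk).1
          have hkj : k ≠ j := (Finset.mem_erase.mp (Finset.mem_erase.mp hk).2).1
          have hd : zu N (emm N j) - zu N (emm N k) ≠ 0 := by
            rw [sub_ne_zero]
            exact fun hx => hkj (emm_inj N hN hk0 hj (zu_inj N hN hx.symm))
          have habsd : ‖zu N (emm N j) - zu N (emm N k)‖ ≠ 0 :=
            norm_ne_zero_iff.mpr hd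
          have hXd : helixWithCenter N r h j s t - helixWithCenter N r h k s t
              = helixC N r h s t * (zu N (emm N j) - zu N (emm N k)) := by
            rw [helix_eq N hN r h j hj s t, helix_eq N hN r h k hk0 s t]; ring
          rw [hXd, norm_mul, helixC_abs N r h hr s t, Complex.ofReal_mul, mul_pow]
          have habsd' : ((‖zu N (emm N j) - zu N (emm N k)‖ : ℝ) : ℂ) ≠ 0 :=
            Complex.ofReal_ne_zero.mpr habsd
          field_simp
        rw [Finset.sum_congr rfl hterm, ← Finset.mul_sum,
          sum_bij_emm2 N hN j hj
            (fun m => (zu N (emm N j) - zu N m)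
              / ((‖zu N (emm N j) - zu N m‖ : ℝ) : ℂ) ^ 2),
          zu_main N hN (emm N j)]
      rw [hterm0, hrest, helix_eq N hN r h j hj s t]
      field_simp
      ring
    rw [helix_deriv_t N r h j hj s t, helix_deriv2_s N r h j hj s t, hsum]
    have hcast : (((1 / h ^ 2 - ((N : ℝ) + 1) / r ^ 2 : ℝ)) : ℂ)
        = 1 / (h : ℂ) ^ 2 - ((N : ℂ) + 1) / (r : ℂ) ^ 2 := by push_cast; ring
    rw [hcast]
    have hI : Complex.I * Complex.I = -1 := Complex.I_mul_I
    field_simp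
    linear_combination (-((r : ℂ) ^ 2
      * helixWithCenter N r h j s t)) * hI

end
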